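/- Let a > 0 and 0 < Δt ≤ 2/√a. The complex eigenvalues of the 2×2 matrix M^IMEX = [[1, -Δt a], [Δt, 1 - Δt² a]] are λ = (2 - Δt² a)/2 ± (i/2)·√(Δt² a (4 - Δt² a)), and every eigenvalue satisfies |λ| = 1. -/

import Mathlib

open Matrix Complex

/-- For `a > 0`, `0 < Δt ≤ 2/√a`, the eigenvalues of
`M^IMEX = [[1, -Δt a], [Δt, 1 - Δt² a]]` are `(2 - Δt² a)/2 ± (i/2)√(Δt² a (4 - Δt² a))`,
and every eigenvalue has modulus exactly 1. -/
theorem stmt3 (a Δt : ℝ) (ha : 0 < a) (hΔt : 0 < Δt) (hΔt2 : Δt ≤ 2 / Real.sqrt a)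
    (M : Matrix (Fin 2) (Fin 2) ℂ)
    (hM : M = !![(1 : ℂ), -(Δt * a : ℝ); (Δt : ℝ), ((1 - Δt ^ 2 * a : ℝ) : ℂ)]) :
    spectrum ℂ M =
      {((2 - Δt ^ 2 * a) / 2 : ℝ) + Complex.I / 2 * Real.sqrt (Δt ^ 2 * a * (4 - Δt ^ 2 * a)),
       ((2 - Δt ^ 2 * a) / 2 : ℝ) - Complex.I / 2 * Real.sqrt (Δt ^ 2 * a * (4 - Δt ^ 2 * a))}
    ∧ ∀ lam ∈ spectrum ℂ M, ‖lam‖ = 1 := by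
  have hsa : 0 < Real.sqrt a := Real.sqrt_pos.2 ha
  have h1 : Δt * Real.sqrt a ≤ 2 := by
    rw [le_div_iff₀ hsa] at hΔt2; linarith
  have hsq : Real.sqrt a ^ 2 = a := Real.sq_sqrt ha.le
  have hc4 : Δt ^ 2 * a ≤ 4 := by nlinarith [mul_nonneg hΔt.le hsa.le]
  have hc0 : 0 ≤ Δt ^ 2 * a := by positivity
  have hs2 : Real.sqrt (Δt ^ 2 * a * (4 - Δt ^ 2 * a)) ^ 2
      = Δt ^ 2 * a * (4 - Δt ^ 2 * a) := Real.sq_sqrt (by nlinarith)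
  have hs2' : ((Real.sqrt (Δt ^ 2 * a * (4 - Δt ^ 2 * a)) : ℝ) : ℂ) ^ 2
      = (Δt : ℂ) ^ 2 * a * (4 - (Δt : ℂ) ^ 2 * a) := by
    rw [show ((Real.sqrt (Δt ^ 2 * a * (4 - Δt ^ 2 * a)) : ℝ) : ℂ) ^ 2
        = ((Real.sqrt (Δt ^ 2 * a * (4 - Δt ^ 2 * a)) ^ 2 : ℝ) : ℂ) by push_cast; ring, hs2]
    push_cast; ring
  set L1 : ℂ := ((2 - Δt ^ 2 * a) / 2 : ℝ)
      + Complex.I / 2 * Real.sqrt (Δt ^ 2 * a * (4 - Δt ^ 2 * a)) with hL1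
  set L2 : ℂ := ((2 - Δt ^ 2 * a) / 2 : ℝ)
      - Complex.I / 2 * Real.sqrt (Δt ^ 2 * a * (4 - Δt ^ 2 * a)) with hL2
  have poly : ∀ z : ℂ,
      (z - 1) * (z - (1 - (Δt : ℂ) ^ 2 * (a : ℂ))) + (Δt : ℂ) * (a : ℂ) * (Δt : ℂ)
        = (z - L1) * (z - L2) := by
    intro z
    rw [hL1, hL2]
    push_cast
    linear_combination (((Real.sqrt (Δt ^ 2 * a * (4 - Δt ^ 2 * a)) : ℝ) : ℂ) ^ 2 / 4)
      * Complex.I_sq - (1 / 4 : ℂ) * hs2'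
  have hdet : ∀ z : ℂ, (z • (1 : Matrix (Fin 2) (Fin 2) ℂ) - M).det = (z - L1) * (z - L2) := by
    intro z
    rw [hM, Matrix.det_fin_two]
    simp [Matrix.smul_apply, Matrix.one_apply]
    linear_combination poly z
  have hmem : ∀ z : ℂ, z ∈ spectrum ℂ M ↔ (z = L1 ∨ z = L2) := by
    intro z
    rw [spectrum.mem_iff, Matrix.isUnit_iff_isUnit_det, isUnit_iff_ne_zero, not_ne_iff,
      Algebra.algebraMap_eq_smul_one, hdet z, mul_eq_zero, sub_eq_zero, sub_eq_zero]
  have habs : ∀ lam : ℂ, (lam = L1 ∨ lam = L2) → ‖lam‖ = 1 := by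
    rintro lam (rfl | rfl) <;>
    · rw [Complex.norm_def, Complex.normSq_apply]
      simp only [hL1, hL2, Complex.add_re, Complex.sub_re, Complex.add_im, Complex.sub_im,
        Complex.ofReal_re, Complex.ofReal_im, Complex.mul_re, Complex.mul_im,
        Complex.div_ofNat_re, Complex.div_ofNat_im, Complex.I_re, Complex.I_im]
      rw [Real.sqrt_eq_one]
      nlinarith [hs2]
  refine ⟨?_, fun lam hlam => habs lam ((hmem lam).1 hlam)⟩
  ext z
  rw [hmem z]
  simp [Set.mem_insert_iff]
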